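/- Let k, l ∈ ℕ and let F : ℝ → ℝ^{k×l} be continuously differentiable such that F and its derivative F' are bounded on ℝ, and suppose there exists α > 0 such that det(F(t) F(t)ᵀ) ≥ α for all t ∈ ℝ. Then F(t) F(t)ᵀ is invertible for every t, the function t ↦ F(t)ᵀ (F(t) F(t)ᵀ)⁻¹ is continuously differentiable, and both this function and its derivative are bounded on ℝ. -/

import Mathlib

open Matrix

structure Nice (f : ℝ → ℝ) : Prop where
  cd : ContDiff ℝ 1 f
  bd : ∃ c, ∀ t, |f t| ≤ c
  db : ∃ c, ∀ t, |deriv f t| ≤ c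

lemma nice_const (c : ℝ) : Nice (fun _ => c) :=
  ⟨contDiff_const, ⟨|c|, fun _ => le_rfl⟩, ⟨0, by simp⟩⟩

lemma Nice.diffAt {f : ℝ → ℝ} (hf : Nice f) (t : ℝ) : DifferentiableAt ℝ f t :=
  (hf.cd.differentiable one_ne_zero).differentiableAt

lemma Nice.add {f g : ℝ → ℝ} (hf : Nice f) (hg : Nice g) : Nice (fun t => f t + g t) := by
  obtain ⟨cf, hcf⟩ := hf.bd; obtain ⟨cg, hcg⟩ := hg.bd
  obtain ⟨cf', hcf'⟩ := hf.db; obtain ⟨cg', hcg'⟩ := hg.db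
  refine ⟨hf.cd.add hg.cd, ⟨cf + cg, fun t => ?_⟩, ⟨cf' + cg', fun t => ?_⟩⟩
  · exact (abs_add_le _ _).trans (add_le_add (hcf t) (hcg t))
  · rw [deriv_fun_add (hf.diffAt t) (hg.diffAt t)]
    exact (abs_add_le _ _).trans (add_le_add (hcf' t) (hcg' t))

lemma Nice.mul {f g : ℝ → ℝ} (hf : Nice f) (hg : Nice g) : Nice (fun t => f t * g t) := by
  obtain ⟨cf, hcf⟩ := hf.bd; obtain ⟨cg, hcg⟩ := hg.bd
  obtain ⟨cf', hcf'⟩ := hf.db; obtain ⟨cg', hcg'⟩ := hg.db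
  refine ⟨hf.cd.mul hg.cd, ⟨cf * cg, fun t => ?_⟩, ⟨cf' * cg + cf * cg', fun t => ?_⟩⟩
  · rw [abs_mul]
    exact mul_le_mul (hcf t) (hcg t) (abs_nonneg _) ((abs_nonneg _).trans (hcf t))
  · rw [deriv_fun_mul (hf.diffAt t) (hg.diffAt t)]
    refine (abs_add_le _ _).trans (add_le_add ?_ ?_)
    · rw [abs_mul]
      exact mul_le_mul (hcf' t) (hcg t) (abs_nonneg _) ((abs_nonneg _).trans (hcf' t))
    · rw [abs_mul]
      exact mul_le_mul (hcf t) (hcg' t) (abs_nonneg _) ((abs_nonneg _).trans (hcf t))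

lemma nice_sum {ι : Type*} (s : Finset ι) (f : ι → ℝ → ℝ) (h : ∀ i ∈ s, Nice (f i)) :
    Nice (fun t => ∑ i ∈ s, f i t) := by
  induction s using Finset.cons_induction with
  | empty => simpa using nice_const 0
  | cons a s ha ih =>
      simp only [Finset.sum_cons]
      exact (h a (Finset.mem_cons_self a s)).add
        (ih (fun i hi => h i (Finset.mem_cons_of_mem hi)))

lemma nice_prod {ι : Type*} (s : Finset ι) (f : ι → ℝ → ℝ) (h : ∀ i ∈ s, Nice (f i)) :
    Nice (fun t => ∏ i ∈ s, f i t) := by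
  induction s using Finset.cons_induction with
  | empty => simpa using nice_const 1
  | cons a s ha ih =>
      simp only [Finset.prod_cons]
      exact (h a (Finset.mem_cons_self a s)).mul
        (ih (fun i hi => h i (Finset.mem_cons_of_mem hi)))

lemma nice_inv {q : ℝ → ℝ} (hq : Nice q) {α : ℝ} (hα : 0 < α) (hqα : ∀ t, α ≤ q t) :
    Nice (fun t => (q t)⁻¹) := by
  have hq0 : ∀ t, q t ≠ 0 := fun t => ne_of_gt (hα.trans_le (hqα t))
  obtain ⟨c', hc'⟩ := hq.db
  refine ⟨hq.cd.inv hq0, ⟨α⁻¹, fun t => ?_⟩, ⟨c' / α ^ 2, fun t => ?_⟩⟩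
  · rw [abs_inv, abs_of_pos (hα.trans_le (hqα t))]
    exact inv_anti₀ hα (hqα t)
  · have hd : HasDerivAt q (deriv q t) t := ((hq.diffAt t).hasDerivAt)
    have : deriv (fun t => (q t)⁻¹) t = -deriv q t / q t ^ 2 := (hd.inv (hq0 t)).deriv
    have hqt : 0 < q t := hα.trans_le (hqα t)
    rw [this, abs_div, abs_neg]
    have h1 : |q t ^ 2| = q t ^ 2 := abs_of_pos (by positivity)
    rw [h1]
    apply div_le_div₀ ((abs_nonneg _).trans (hc' t)) (hc' t) (by positivity)
    exact pow_le_pow_left₀ hα.le (hqα t) 2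

lemma nice_det {n : ℕ} (M : ℝ → Matrix (Fin n) (Fin n) ℝ)
    (h : ∀ i j, Nice (fun t => M t i j)) : Nice (fun t => (M t).det) := by
  have : (fun t => (M t).det) =
      fun t => ∑ σ : Equiv.Perm (Fin n), ((Equiv.Perm.sign σ : ℤ) : ℝ) * ∏ i, M t (σ i) i := by
    funext t
    rw [Matrix.det_apply]
    simp [Units.smul_def, zsmul_eq_mul]
  rw [this]
  exact nice_sum _ _ (fun σ _ =>
    (nice_const _).mul (nice_prod _ _ (fun i _ => h (σ i) i)))

theorem stmt4 (k l : ℕ) (F : ℝ → Matrix (Fin k) (Fin l) ℝ)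
    (hF : ∀ i j, ContDiff ℝ 1 fun t => F t i j)
    (hFbd : ∃ c : ℝ, ∀ (t : ℝ) (i : Fin k) (j : Fin l), |F t i j| ≤ c)
    (hF'bd : ∃ c : ℝ, ∀ (t : ℝ) (i : Fin k) (j : Fin l), |deriv (fun s => F s i j) t| ≤ c)
    (α : ℝ) (hα : 0 < α)
    (hdet : ∀ t : ℝ, α ≤ (F t * (F t)ᵀ).det) :
    (∀ t : ℝ, IsUnit (F t * (F t)ᵀ)) ∧
    (∀ (i : Fin l) (j : Fin k), ContDiff ℝ 1 fun t => ((F t)ᵀ * (F t * (F t)ᵀ)⁻¹) i j) ∧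
    (∃ c : ℝ, ∀ (t : ℝ) (i : Fin l) (j : Fin k), |((F t)ᵀ * (F t * (F t)ᵀ)⁻¹) i j| ≤ c) ∧
    (∃ c : ℝ, ∀ (t : ℝ) (i : Fin l) (j : Fin k),
      |deriv (fun s => ((F s)ᵀ * (F s * (F s)ᵀ)⁻¹) i j) t| ≤ c) := by
  -- entries of F are Nice
  obtain ⟨c0, hc0⟩ := hFbd
  obtain ⟨c1, hc1⟩ := hF'bd
  have hFnice : ∀ i j, Nice (fun t => F t i j) := fun i j =>
    ⟨hF i j, ⟨c0, fun t => hc0 t i j⟩, ⟨c1, fun t => hc1 t i j⟩⟩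
  set G : ℝ → Matrix (Fin k) (Fin k) ℝ := fun t => F t * (F t)ᵀ with hG
  have hGnice : ∀ i j, Nice (fun t => G t i j) := by
    intro i j
    have : (fun t => G t i j) = fun t => ∑ m, F t i m * F t j m := by
      funext t; simp [hG, Matrix.mul_apply, Matrix.transpose_apply]
    rw [this]
    exact nice_sum _ _ (fun m _ => (hFnice i m).mul (hFnice j m))
  have hdetnice : Nice (fun t => (G t).det) := nice_det G hGnice
  have hadjnice : ∀ i j, Nice (fun t => (G t).adjugate i j) := by
    intro i j
    have : (fun t => (G t).adjugate i j) =
        fun t => ((G t).updateRow j (Pi.single i 1)).det := by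
      funext t; rw [Matrix.adjugate_apply]
    rw [this]
    apply nice_det
    intro a b
    by_cases hab : a = j
    · subst hab
      simp only [Matrix.updateRow_self]
      exact nice_const _
    · simp only [Matrix.updateRow_ne hab]
      exact hGnice a b
  have hinvnice : ∀ i j, Nice (fun t => (G t)⁻¹ i j) := by
    intro i j
    have : (fun t => (G t)⁻¹ i j) = fun t => ((G t).det)⁻¹ * (G t).adjugate i j := by
      funext t
      rw [Matrix.inv_def]
      simp [Ring.inverse_eq_inv']
    rw [this]
    exact (nice_inv hdetnice hα (fun t => hdet t)).mul (hadjnice i j)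
  have htarget : ∀ (i : Fin l) (j : Fin k),
      Nice (fun t => ((F t)ᵀ * (G t)⁻¹) i j) := by
    intro i j
    have : (fun t => ((F t)ᵀ * (G t)⁻¹) i j) = fun t => ∑ m, F t m i * (G t)⁻¹ m j := by
      funext t; simp [Matrix.mul_apply, Matrix.transpose_apply]
    rw [this]
    exact nice_sum _ _ (fun m _ => (hFnice m i).mul (hinvnice m j))
  refine ⟨?_, ?_, ?_, ?_⟩
  · intro t
    rw [Matrix.isUnit_iff_isUnit_det]
    exact isUnit_iff_ne_zero.2 (ne_of_gt (hα.trans_le (hdet t)))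
  · exact fun i j => (htarget i j).cd
  · choose c hc using fun i j => (htarget i j).bd
    refine ⟨∑ p : Fin l × Fin k, max (c p.1 p.2) 0, fun t i j => ?_⟩
    refine (hc i j t).trans (le_trans (le_max_left _ (0:ℝ)) ?_)
    exact Finset.single_le_sum (f := fun p : Fin l × Fin k => max (c p.1 p.2) 0)
      (fun p _ => le_max_right _ _) (Finset.mem_univ (i, j))
  · choose c hc using fun i j => (htarget i j).db
    refine ⟨∑ p : Fin l × Fin k, max (c p.1 p.2) 0, fun t i j => ?_⟩
    refine (hc i j t).trans (le_trans (le_max_left _ (0:ℝ)) ?_)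
    exact Finset.single_le_sum (f := fun p : Fin l × Fin k => max (c p.1 p.2) 0)
      (fun p _ => le_max_right _ _) (Finset.mem_univ (i, j))
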